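/- Let X = A^ℕ with A finite, φ continuous, L the transfer operator, ν an eigenmeasure with L*ν = λν, λ > 0, and μ a T-invariant probability measure with μ(C) > 0 ⟹ ν(C) > 0 for cylinders C. Define h_n(x) = μ([x]_n)/ν([x]_n) where [x]_n is the cylinder on coordinates 0,…,n-1. If h_n converges uniformly on X to a function h, then h is continuous, h is an eigenfunction: Lh = λh, and inf h > 0. -/

import Mathlib

set_option linter.unusedSectionVars false
set_option linter.unusedVariables false
set_option maxHeartbeats 1000000

open MeasureTheory

/-- Prepending a symbol to a one-sided configuration. -/
def consSeq {A : Type*} (a : A) (x : ℕ → A) : ℕ → A :=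
  fun n => match n with
  | 0 => a
  | Nat.succ m => x m

/-- The left shift on `A^ℕ`. -/
def shiftT {A : Type*} : (ℕ → A) → (ℕ → A) := fun x n => x (n + 1)

/-- The cylinder `[x]_n = {y : y_i = x_i for 0 ≤ i < n}`. -/
def cylSet {A : Type*} (x : ℕ → A) (n : ℕ) : Set (ℕ → A) :=
  {y | ∀ i < n, y i = x i}

section Aux

variable {A : Type*} [TopologicalSpace A] [DiscreteTopology A]
  [Fintype A] [Nonempty A] [MeasurableSpace A] [BorelSpace A]

lemma cylSet_zero (x : ℕ → A) : cylSet x 0 = Set.univ := by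
  ext y; simp [cylSet]

lemma isOpen_cylSet (x : ℕ → A) (n : ℕ) : IsOpen (cylSet x n) := by
  have : cylSet x n = ⋂ i : Fin n, (fun y : ℕ → A => y i) ⁻¹' ({x i} : Set A) := by
    ext y; simp [cylSet]
    constructor
    · intro h i; exact h i i.2
    · intro h i hi; exact h ⟨i, hi⟩
  rw [this]
  exact isOpen_iInter_of_finite fun i =>
    (isOpen_discrete {x (i : ℕ)}).preimage (continuous_apply (i : ℕ))

lemma isClosed_cylSet (x : ℕ → A) (n : ℕ) : IsClosed (cylSet x n) := by
  have : cylSet x n = ⋂ i : Fin n, (fun y : ℕ → A => y i) ⁻¹' ({x i} : Set A) := by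
    ext y; simp [cylSet]
    constructor
    · intro h i; exact h i i.2
    · intro h i hi; exact h ⟨i, hi⟩
  rw [this]
  exact isClosed_iInter fun i =>
    (isClosed_discrete {x (i : ℕ)}).preimage (continuous_apply (i : ℕ))

lemma cylSet_eq_of_mem {x y : ℕ → A} {n : ℕ} (hy : y ∈ cylSet x n) :
    cylSet y n = cylSet x n := by
  ext z; constructor
  · intro hz i hi; exact (hz i hi).trans (hy i hi)
  · intro hz i hi; exact (hz i hi).trans (hy i hi).symm

lemma mem_cylSet_self (x : ℕ → A) (n : ℕ) : x ∈ cylSet x n := fun _ _ => rfl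

lemma consSeq_mem_cylSet_iff {a b : A} {x y : ℕ → A} {n : ℕ} :
    consSeq b y ∈ cylSet (consSeq a x) (n + 1) ↔ b = a ∧ y ∈ cylSet x n := by
  constructor
  · intro hmem
    refine ⟨hmem 0 (Nat.succ_pos n), fun i hi => hmem (i + 1) (Nat.succ_lt_succ hi)⟩
  · rintro ⟨rfl, hy⟩ i hi
    match i with
    | 0 => rfl
    | Nat.succ m => exact hy m (Nat.lt_of_succ_lt_succ hi)

lemma consSeq_zero_shift (z : ℕ → A) : consSeq (z 0) (shiftT z) = z := by
  funext i; match i with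
  | 0 => rfl
  | Nat.succ m => rfl

/-- Any open set containing `x` contains a cylinder around `x`. -/
lemma exists_cylSet_subset {U : Set (ℕ → A)} (hU : IsOpen U) {x : ℕ → A} (hx : x ∈ U) :
    ∃ n, cylSet x n ⊆ U := by
  rcases (isOpen_pi_iff.1 hU) x hx with ⟨I, u, hu, hsub⟩
  refine ⟨(I.sup id) + 1, fun y hy => hsub ?_⟩
  intro i hi
  have : y i = x i := hy i (Nat.lt_succ_of_le (Finset.le_sup (f := id) hi))
  rw [this]; exact (hu i hi).2

/-- A function depending only on the first `n` coordinates (through cylinder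
measures) is continuous. -/
lemma continuous_of_cyl_dep (g : (ℕ → A) → ℝ) (n : ℕ)
    (hg : ∀ x y : ℕ → A, y ∈ cylSet x n → g y = g x) : Continuous g := by
  apply IsLocallyConstant.continuous (f := g)
  rw [IsLocallyConstant.iff_exists_open]
  intro x
  exact ⟨cylSet x n, isOpen_cylSet x n, mem_cylSet_self x n, fun y hy => hg x y hy⟩

/-- Uniform modulus of continuity with respect to cylinders. -/
lemma cyl_modulus (ψ : (ℕ → A) → ℝ) (hψ : Continuous ψ) {ε : ℝ} (hε : 0 < ε) :
    ∃ N : ℕ, ∀ n ≥ N, ∀ z y : ℕ → A, y ∈ cylSet z n → |ψ y - ψ z| ≤ ε := by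
  have key : ∀ z : ℕ → A, ∃ m : ℕ, ∀ y ∈ cylSet z m, |ψ y - ψ z| ≤ ε / 2 := by
    intro z
    have hop : IsOpen {y : ℕ → A | |ψ y - ψ z| < ε / 2} := by
      have : Continuous fun y : ℕ → A => |ψ y - ψ z| := (hψ.sub continuous_const).abs
      exact isOpen_lt this continuous_const
    have hz : z ∈ {y : ℕ → A | |ψ y - ψ z| < ε / 2} := by simp [half_pos hε]
    rcases exists_cylSet_subset hop hz with ⟨m, hm⟩
    exact ⟨m, fun y hy => le_of_lt (hm hy)⟩
  choose m hm using key
  have hcov : Set.univ ⊆ ⋃ z : ℕ → A, cylSet z (m z) :=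
    fun z _ => Set.mem_iUnion.2 ⟨z, mem_cylSet_self z (m z)⟩
  rcases isCompact_univ.elim_finite_subcover (fun z : ℕ → A => cylSet z (m z))
      (fun z => isOpen_cylSet z (m z)) hcov with ⟨t, ht⟩
  refine ⟨t.sup m, fun n hn z y hy => ?_⟩
  rcases Set.mem_iUnion₂.1 (ht (Set.mem_univ z)) with ⟨w, hw, hzw⟩
  have hmw : m w ≤ n := le_trans (Finset.le_sup hw) hn
  have hyw : y ∈ cylSet w (m w) := by
    intro i hi
    exact (hy i (lt_of_lt_of_le hi hmw)).trans (hzw i hi)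
  calc |ψ y - ψ z| ≤ |ψ y - ψ w| + |ψ w - ψ z| := abs_sub_le _ _ _
    _ ≤ ε / 2 + ε / 2 := by
        refine add_le_add (hm w y hyw) ?_
        rw [abs_sub_comm]; exact hm w z hzw
    _ = ε := add_halves ε

lemma measurableSet_cylSet (x : ℕ → A) (n : ℕ) : MeasurableSet (cylSet x n) :=
  (isOpen_cylSet x n).measurableSet

lemma mem_cylSet_symm {x y : ℕ → A} {n : ℕ} (hy : y ∈ cylSet x n) : x ∈ cylSet y n :=
  fun i hi => (hy i hi).symm

lemma mem_cylSet_trans {x y z : ℕ → A} {n : ℕ} (h1 : z ∈ cylSet y n)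
    (h2 : y ∈ cylSet x n) : z ∈ cylSet x n :=
  fun i hi => (h1 i hi).trans (h2 i hi)

lemma mem_cylSet_congr {x y z : ℕ → A} {n : ℕ} (hy : y ∈ cylSet z n) :
    y ∈ cylSet x n ↔ z ∈ cylSet x n :=
  ⟨fun h => mem_cylSet_trans (mem_cylSet_symm hy) h, fun h => mem_cylSet_trans hy h⟩

lemma continuous_indicator_cyl (x : ℕ → A) (n : ℕ) :
    Continuous ((cylSet x n).indicator fun _ => (1 : ℝ)) := by
  apply continuous_of_cyl_dep _ n
  intro z y hy
  by_cases hz : z ∈ cylSet x n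
  · simp [Set.indicator_apply, hz, (mem_cylSet_congr hy).2 hz]
  · have : y ∉ cylSet x n := fun h => hz ((mem_cylSet_congr hy).1 h)
    simp [Set.indicator_apply, hz, this]


lemma continuous_integrable (ν : Measure (ℕ → A)) [IsFiniteMeasure ν]
    {f : (ℕ → A) → ℝ} (hf : Continuous f) : Integrable f ν := by
  rw [← integrableOn_univ]
  exact (hf.locallyIntegrable).integrableOn_isCompact isCompact_univ

lemma nu_cons_formula (φ : (ℕ → A) → ℝ) (hφ : Continuous φ) (lam : ℝ)
    (ν : Measure (ℕ → A)) [IsProbabilityMeasure ν]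
    (heigm : ∀ f : (ℕ → A) → ℝ, Continuous f →
      ∫ x, (∑ a : A, Real.exp (φ (consSeq a x)) * f (consSeq a x)) ∂ν =
        lam * ∫ x, f x ∂ν)
    (a : A) (x : ℕ → A) (n : ℕ) :
    ∫ y in cylSet x n, Real.exp (φ (consSeq a y)) ∂ν
      = lam * (ν (cylSet (consSeq a x) (n + 1))).toReal := by
  have hf := heigm ((cylSet (consSeq a x) (n+1)).indicator fun _ => (1:ℝ))
    (continuous_indicator_cyl _ _)
  have h1 : (fun y => ∑ b : A, Real.exp (φ (consSeq b y)) *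
      (cylSet (consSeq a x) (n+1)).indicator (fun _ => (1:ℝ)) (consSeq b y))
      = (cylSet x n).indicator fun y => Real.exp (φ (consSeq a y)) := by
    funext y
    rw [Finset.sum_eq_single a]
    · by_cases hy : y ∈ cylSet x n
      · have hmem : consSeq a y ∈ cylSet (consSeq a x) (n+1) :=
          consSeq_mem_cylSet_iff.2 ⟨rfl, hy⟩
        simp [Set.indicator_apply, hy, hmem]
      · have hmem : consSeq a y ∉ cylSet (consSeq a x) (n+1) :=
          fun hh => hy (consSeq_mem_cylSet_iff.1 hh).2
        simp [Set.indicator_apply, hy, hmem]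
    · intro b _ hb
      have hmem : consSeq b y ∉ cylSet (consSeq a x) (n+1) :=
        fun hh => hb (consSeq_mem_cylSet_iff.1 hh).1
      simp [Set.indicator_apply, hmem]
    · intro hcon; exact absurd (Finset.mem_univ a) hcon
  rw [h1] at hf
  rw [← integral_indicator (measurableSet_cylSet x n), hf,
    integral_indicator_const _ (measurableSet_cylSet _ _)]
  simp [smul_eq_mul, measureReal_def]


lemma continuous_consSeq (a : A) : Continuous fun y : ℕ → A => consSeq a y := by
  apply continuous_pi
  intro n
  match n with
  | 0 => exact continuous_const
  | Nat.succ m => exact continuous_apply m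

lemma exp_phi_bounds (φ : (ℕ → A) → ℝ) (hφ : Continuous φ) :
    ∃ c C : ℝ, 0 < c ∧ ∀ y : ℕ → A, c ≤ Real.exp (φ y) ∧ Real.exp (φ y) ≤ C := by
  obtain ⟨zmin, _, hmin⟩ := isCompact_univ.exists_isMinOn (Set.univ_nonempty)
    (hφ.continuousOn (s := Set.univ))
  obtain ⟨zmax, _, hmax⟩ := isCompact_univ.exists_isMaxOn (Set.univ_nonempty)
    (hφ.continuousOn (s := Set.univ))
  refine ⟨Real.exp (φ zmin), Real.exp (φ zmax), Real.exp_pos _, fun y => ⟨?_, ?_⟩⟩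
  · exact Real.exp_le_exp.2 (hmin (Set.mem_univ y))
  · exact Real.exp_le_exp.2 (hmax (Set.mem_univ y))

lemma nu_cyl_pos (φ : (ℕ → A) → ℝ) (hφ : Continuous φ)
    (lam : ℝ) (hlam : 0 < lam)
    (ν : Measure (ℕ → A)) [IsProbabilityMeasure ν]
    (heigm : ∀ f : (ℕ → A) → ℝ, Continuous f →
      ∫ x, (∑ a : A, Real.exp (φ (consSeq a x)) * f (consSeq a x)) ∂ν =
        lam * ∫ x, f x ∂ν)
    (x : ℕ → A) (n : ℕ) : 0 < (ν (cylSet x n)).toReal := by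
  obtain ⟨c, C, hc, hbd⟩ := exp_phi_bounds φ hφ
  induction n generalizing x with
  | zero => simp [cylSet_zero]
  | succ n ih =>
    have key := nu_cons_formula φ hφ lam ν heigm (x 0) (shiftT x) n
    rw [consSeq_zero_shift x] at key
    have hint : IntegrableOn (fun y => Real.exp (φ (consSeq (x 0) y))) (cylSet (shiftT x) n) ν :=
      (continuous_integrable ν ((Real.continuous_exp.comp hφ).comp
        (continuous_consSeq (x 0)))).integrableOn
    have hlow : c * (ν (cylSet (shiftT x) n)).toReal ≤
        ∫ y in cylSet (shiftT x) n, Real.exp (φ (consSeq (x 0) y)) ∂ν :=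
      setIntegral_ge_of_const_le_real (measurableSet_cylSet _ _) (measure_ne_top ν _)
        (fun y _ => (hbd _).1) hint
    have h1 : 0 < lam * (ν (cylSet x (n+1))).toReal :=
      lt_of_lt_of_le (mul_pos hc (ih (shiftT x))) (hlow.trans key.le)
    nlinarith [h1, hlam]


lemma continuous_shiftT : Continuous (shiftT : (ℕ → A) → (ℕ → A)) :=
  continuous_pi fun n => continuous_apply (n + 1)

lemma mem_cylSet_cons_iff {a : A} {x y : ℕ → A} {n : ℕ} :
    y ∈ cylSet (consSeq a x) (n + 1) ↔ y 0 = a ∧ shiftT y ∈ cylSet x n := by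
  conv_lhs => rw [← consSeq_zero_shift y]
  exact consSeq_mem_cylSet_iff

lemma preimage_shiftT_cyl (x : ℕ → A) (n : ℕ) :
    shiftT ⁻¹' cylSet x n = ⋃ a : A, cylSet (consSeq a x) (n + 1) := by
  ext y
  simp only [Set.mem_preimage, Set.mem_iUnion]
  constructor
  · intro hy
    exact ⟨y 0, mem_cylSet_cons_iff.2 ⟨rfl, hy⟩⟩
  · rintro ⟨a, ha⟩
    exact (mem_cylSet_cons_iff.1 ha).2

lemma cyl_cons_disjoint (x : ℕ → A) (n : ℕ) :
    Pairwise (Function.onFun Disjoint fun a : A => cylSet (consSeq a x) (n + 1)) := by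
  intro a b hab
  rw [Function.onFun, Set.disjoint_left]
  intro y hya hyb
  exact hab (((mem_cylSet_cons_iff.1 hya).1).symm.trans (mem_cylSet_cons_iff.1 hyb).1)

lemma mu_decomp (μ : Measure (ℕ → A)) [IsProbabilityMeasure μ]
    (hinv : Measure.map shiftT μ = μ) (x : ℕ → A) (n : ℕ) :
    μ (cylSet x n) = ∑ a : A, μ (cylSet (consSeq a x) (n + 1)) := by
  conv_lhs => rw [← hinv]
  rw [Measure.map_apply continuous_shiftT.measurable (measurableSet_cylSet x n),
    preimage_shiftT_cyl, measure_iUnion (cyl_cons_disjoint x n)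
      (fun a => measurableSet_cylSet _ _), tsum_fintype]

lemma mu_decomp_toReal (μ : Measure (ℕ → A)) [IsProbabilityMeasure μ]
    (hinv : Measure.map shiftT μ = μ) (x : ℕ → A) (n : ℕ) :
    (μ (cylSet x n)).toReal = ∑ a : A, (μ (cylSet (consSeq a x) (n + 1))).toReal := by
  rw [mu_decomp μ hinv x n, ENNReal.toReal_sum]
  intro a _
  exact measure_ne_top μ _

lemma continuous_hn (μ ν : Measure (ℕ → A)) (n : ℕ) :
    Continuous fun x : ℕ → A => (μ (cylSet x n)).toReal / (ν (cylSet x n)).toReal := by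
  apply continuous_of_cyl_dep _ n
  intro x y hy
  rw [cylSet_eq_of_mem hy]


noncomputable def wext (n : ℕ) (w : Fin n → A) : ℕ → A :=
  fun i => if h : i < n then w ⟨i, h⟩ else Classical.arbitrary A

lemma wext_partition (n : ℕ) :
    (Set.univ : Set (ℕ → A)) = ⋃ w : Fin n → A, cylSet (wext n w) n := by
  ext x
  simp only [Set.mem_univ, true_iff, Set.mem_iUnion]
  refine ⟨fun i : Fin n => x i, fun i hi => ?_⟩
  simp [wext, hi]

lemma wext_disjoint (n : ℕ) :
    Pairwise (Function.onFun Disjoint fun w : Fin n → A => cylSet (wext n w) n) := by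
  intro w w' hne
  rw [Function.onFun, Set.disjoint_left]
  intro y hy hy'
  apply hne
  funext i
  have h1 := hy i i.2
  have h2 := hy' i i.2
  rw [h1] at h2
  simpa [wext, i.2] using h2

lemma integral_ratio_eq_one (μ ν : Measure (ℕ → A)) [IsProbabilityMeasure μ]
    [IsProbabilityMeasure ν]
    (hν : ∀ (x : ℕ → A) (m : ℕ), 0 < (ν (cylSet x m)).toReal) (n : ℕ) :
    ∫ x, (μ (cylSet x n)).toReal / (ν (cylSet x n)).toReal ∂ν = 1 := by
  set g : (ℕ → A) → ℝ := fun x => (μ (cylSet x n)).toReal / (ν (cylSet x n)).toReal with hg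
  have hgc : Continuous g := continuous_hn μ ν n
  have hgint : Integrable g ν := continuous_integrable ν hgc
  have h1 : ∫ x, g x ∂ν = ∑ w : Fin n → A, ∫ x in cylSet (wext n w) n, g x ∂ν := by
    rw [← setIntegral_univ, wext_partition n]
    exact integral_iUnion_fintype (fun w => measurableSet_cylSet _ _) (wext_disjoint n)
      (fun w => hgint.integrableOn)
  have h2 : ∀ w : Fin n → A, ∫ x in cylSet (wext n w) n, g x ∂ν
      = (μ (cylSet (wext n w) n)).toReal := by
    intro w
    have hconst : ∀ x ∈ cylSet (wext n w) n, g x = g (wext n w) := by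
      intro x hx
      simp only [hg]
      rw [cylSet_eq_of_mem hx]
    rw [setIntegral_congr_fun (measurableSet_cylSet _ _) hconst, setIntegral_const, smul_eq_mul, hg, measureReal_def]
    rw [mul_div_cancel₀ _ (ne_of_gt (hν _ n))]
  have h3 : ∑ w : Fin n → A, (μ (cylSet (wext n w) n)).toReal = 1 := by
    have hsum : μ Set.univ = ∑ w : Fin n → A, μ (cylSet (wext n w) n) := by
      rw [wext_partition n, measure_iUnion (wext_disjoint n)
        (fun w => measurableSet_cylSet _ _), tsum_fintype]
    have := congrArg ENNReal.toReal hsum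
    rw [measure_univ, ENNReal.toReal_sum (fun w _ => measure_ne_top μ _)] at this
    simpa using this.symm
  rw [h1]
  simp_rw [h2]
  exact h3


/-- Splicing: first `n` coordinates from `y`, rest from `x`. -/
def splice (n : ℕ) (y x : ℕ → A) : ℕ → A := fun i => if i < n then y i else x (i - n)

lemma splice_zero (y x : ℕ → A) : splice 0 y x = x := by
  funext i; simp [splice]

lemma splice_succ (n : ℕ) (y x : ℕ → A) :
    splice (n + 1) y x = consSeq (y 0) (splice n (shiftT y) x) := by
  funext i
  match i with
  | 0 => simp [splice, consSeq]
  | Nat.succ m =>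
    simp only [splice, consSeq, shiftT, Nat.succ_sub_succ]
    by_cases hm : m < n
    · simp [hm, Nat.succ_lt_succ hm]
    · simp [hm, fun hh => hm (Nat.lt_of_succ_lt_succ hh)]

lemma splice_mem_cylSet (n : ℕ) (y x : ℕ → A) : splice n y x ∈ cylSet y n := by
  intro i hi; simp [splice, hi]

end Aux

/-- Lemma 2.1, Radon–Nikodym interpretation: with `ν` an
eigenmeasure of `L_φ` (eigenvalue `λ > 0`) and `μ` a shift-invariant
probability measure positive on cylinders whenever `ν` is (i.e.\ cylinder
absolute continuity), if the likelihood ratios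
`h_n(x) = μ([x]_n)/ν([x]_n)` converge uniformly to `h`, then `h` is a
continuous eigenfunction `Lh = λh` with `inf h > 0`. -/
theorem uniform_limit_likelihood_ratio_is_eigenfunction
    {A : Type*} [Fintype A] [Nonempty A]
    [TopologicalSpace A] [DiscreteTopology A] [MeasurableSpace A]
    [BorelSpace A]
    (φ : (ℕ → A) → ℝ) (hφ : Continuous φ)
    (lam : ℝ) (hlam : 0 < lam)
    (ν : Measure (ℕ → A)) [IsProbabilityMeasure ν]
    (heigm : ∀ f : (ℕ → A) → ℝ, Continuous f →
      ∫ x, (∑ a : A, Real.exp (φ (consSeq a x)) * f (consSeq a x)) ∂ν =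
        lam * ∫ x, f x ∂ν)
    (μ : Measure (ℕ → A)) [IsProbabilityMeasure μ]
    (hinv : Measure.map shiftT μ = μ)
    (hcylpos : ∀ (x : ℕ → A) (n : ℕ), 0 < μ (cylSet x n) → 0 < ν (cylSet x n))
    (h : (ℕ → A) → ℝ)
    (hunif : TendstoUniformly
      (fun n x => (μ (cylSet x n)).toReal / (ν (cylSet x n)).toReal)
      h Filter.atTop) :
    Continuous h ∧
      (∀ x : ℕ → A,
        ∑ a : A, Real.exp (φ (consSeq a x)) * h (consSeq a x) = lam * h x) ∧
      ∃ ε > 0, ∀ x : ℕ → A, ε ≤ h x := by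
  obtain ⟨c0, C0, hc0, hbd⟩ := exp_phi_bounds φ hφ
  have hνpos : ∀ (x : ℕ → A) (n : ℕ), 0 < (ν (cylSet x n)).toReal :=
    nu_cyl_pos φ hφ lam hlam ν heigm
  have hcont : Continuous h :=
    hunif.continuous (Filter.Eventually.of_forall fun n => continuous_hn μ ν n).frequently
  have hptlim : ∀ y : ℕ → A, Filter.Tendsto
      (fun n => (μ (cylSet y n)).toReal / (ν (cylSet y n)).toReal) Filter.atTop (nhds (h y)) :=
    hunif.tendsto_at
  have hnonneg : ∀ y : ℕ → A, 0 ≤ h y := fun y =>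
    ge_of_tendsto (hptlim y) (Filter.Eventually.of_forall fun n =>
      div_nonneg ENNReal.toReal_nonneg ENNReal.toReal_nonneg)
  -- uniform bound on the ratios, eventually
  obtain ⟨xM, -, hxM⟩ := isCompact_univ.exists_isMaxOn Set.univ_nonempty hcont.continuousOn
  set M : ℝ := h xM + 1 with hM
  have hM0 : 0 < M := lt_of_le_of_lt (hnonneg xM) (lt_add_one _)
  obtain ⟨N0, hN0⟩ : ∃ N0 : ℕ, ∀ n ≥ N0, ∀ y : ℕ → A,
      (μ (cylSet y n)).toReal / (ν (cylSet y n)).toReal ≤ M := by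
    have := (Metric.tendstoUniformly_iff.1 hunif) 1 one_pos
    rcases Filter.eventually_atTop.1 this with ⟨N0, hN0⟩
    refine ⟨N0, fun n hn y => ?_⟩
    have hd := hN0 n hn y
    rw [Real.dist_eq] at hd
    have h1 : (μ (cylSet y n)).toReal / (ν (cylSet y n)).toReal - h y ≤ 1 := by
      have := abs_le.1 hd.le
      linarith [this.1]
    have h2 : h y ≤ h xM := hxM (Set.mem_univ y)
    simp only [hM]; linarith
  -- combined modulus of continuity
  have hmod : ∀ ε > (0:ℝ), ∃ N : ℕ, ∀ n ≥ N, ∀ (a : A) (z y : ℕ → A), y ∈ cylSet z n →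
      |Real.exp (φ (consSeq a y)) - Real.exp (φ (consSeq a z))| ≤ ε := by
    intro ε hε
    have key := fun a : A => cyl_modulus (fun y => Real.exp (φ (consSeq a y)))
      ((Real.continuous_exp.comp hφ).comp (continuous_consSeq a)) hε
    choose N hN using key
    exact ⟨Finset.univ.sup N, fun n hn a z y hy =>
      hN a n (le_trans (Finset.le_sup (Finset.mem_univ a)) hn) z y hy⟩
  -- Part 2 : the eigenfunction identity
  have heig : ∀ x : ℕ → A,
      ∑ a : A, Real.exp (φ (consSeq a x)) * h (consSeq a x) = lam * h x := by
    intro x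
    set F : ℕ → (ℕ → A) → ℝ :=
      fun n y => (μ (cylSet y n)).toReal / (ν (cylSet y n)).toReal with hF
    set D : ℕ → ℝ := fun n =>
      (∑ a : A, Real.exp (φ (consSeq a x)) * F (n+1) (consSeq a x)) - lam * F n x with hD
    have hlim1 : Filter.Tendsto D Filter.atTop
        (nhds ((∑ a : A, Real.exp (φ (consSeq a x)) * h (consSeq a x)) - lam * h x)) := by
      apply Filter.Tendsto.sub
      · apply tendsto_finset_sum
        intro a _
        exact ((hptlim (consSeq a x)).comp (Filter.tendsto_add_atTop_nat 1)).const_mul _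
      · exact (hptlim x).const_mul lam
    have hlim0 : Filter.Tendsto D Filter.atTop (nhds 0) := by
      rw [Metric.tendsto_atTop]
      intro ε hε
      set K : ℝ := (Fintype.card A : ℝ) * M + 1 with hK
      have hK0 : 0 < K := by
        have : (0:ℝ) ≤ (Fintype.card A : ℝ) * M :=
          mul_nonneg (Nat.cast_nonneg _) hM0.le
        simp only [hK]; linarith
      set ε' : ℝ := ε / (2 * K) with hε'
      have hε'0 : 0 < ε' := div_pos hε (by linarith)
      obtain ⟨N1, hN1⟩ := hmod ε' hε'0
      refine ⟨max N1 N0, fun n hn => ?_⟩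
      have hnN1 : N1 ≤ n := le_trans (le_max_left _ _) hn
      have hnN0 : N0 ≤ n := le_trans (le_max_right _ _) hn
      rw [Real.dist_eq, sub_zero]
      -- rewrite lam * F n x as a sum
      set r : ℝ := (ν (cylSet x n)).toReal with hr
      have hr0 : 0 < r := hνpos x n
      have hsum : lam * F n x = ∑ a : A,
          lam * ((μ (cylSet (consSeq a x) (n+1))).toReal / r) := by
        simp only [hF, hr]
        rw [mu_decomp_toReal μ hinv x n, Finset.sum_div, Finset.mul_sum]
      have hDeq : D n = ∑ a : A,
          (Real.exp (φ (consSeq a x)) * F (n+1) (consSeq a x)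
            - lam * ((μ (cylSet (consSeq a x) (n+1))).toReal / r)) := by
        rw [hD]
        simp only [hsum, Finset.sum_sub_distrib]
      have hterm : ∀ a : A,
          |Real.exp (φ (consSeq a x)) * F (n+1) (consSeq a x)
            - lam * ((μ (cylSet (consSeq a x) (n+1))).toReal / r)| ≤ M * ε' := by
        intro a
        set q : ℝ := (ν (cylSet (consSeq a x) (n+1))).toReal with hq
        have hq0 : 0 < q := hνpos _ _
        set p : ℝ := (μ (cylSet (consSeq a x) (n+1))).toReal with hp
        set ψ : ℝ := Real.exp (φ (consSeq a x)) with hψ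
        -- key integral estimate
        have hint : IntegrableOn (fun y => Real.exp (φ (consSeq a y))) (cylSet x n) ν :=
          (continuous_integrable ν ((Real.continuous_exp.comp hφ).comp
            (continuous_consSeq a))).integrableOn
        have hconst : ∫ y in cylSet x n, ψ ∂ν = r * ψ := by
          rw [setIntegral_const, smul_eq_mul, measureReal_def]
        have hdiff : ψ * r - lam * q
            = ∫ y in cylSet x n, (ψ - Real.exp (φ (consSeq a y))) ∂ν := by
          rw [integral_sub (integrableOn_const (C := ψ) (s := cylSet x n) (measure_ne_top ν _) enorm_ne_top) hint,
            hconst, nu_cons_formula φ hφ lam ν heigm a x n, ← hq]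
          ring
        have hbound : |ψ * r - lam * q| ≤ ε' * r := by
          rw [hdiff]
          have := norm_setIntegral_le_of_norm_le_const (μ := ν)
            (s := cylSet x n) (f := fun y => ψ - Real.exp (φ (consSeq a y)))
            (C := ε') (measure_lt_top ν _) ?_
          · simpa [Real.norm_eq_abs, hr, measureReal_def] using this
          · intro y hy
            rw [Real.norm_eq_abs, abs_sub_comm]
            exact hN1 n hnN1 a x y hy
        have hFval : F (n+1) (consSeq a x) = p / q := rfl
        have hF0 : 0 ≤ p / q := div_nonneg ENNReal.toReal_nonneg hq0.le
        have hFM : p / q ≤ M := by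
          rw [← hFval]; exact hN0 (n+1) (le_trans hnN0 (Nat.le_succ n)) _
        have halg : ψ * F (n+1) (consSeq a x) - lam * (p / r)
            = (p / q) * (ψ - lam * q / r) := by
          rw [hFval]
          field_simp
        rw [halg, abs_mul, abs_of_nonneg hF0]
        have habs2 : |ψ - lam * q / r| ≤ ε' := by
          have : ψ - lam * q / r = (ψ * r - lam * q) / r := by field_simp
          rw [this, abs_div, abs_of_pos hr0, div_le_iff₀ hr0]
          linarith [hbound]
        calc (p / q) * |ψ - lam * q / r| ≤ (p / q) * ε' :=
              mul_le_mul_of_nonneg_left habs2 hF0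
          _ ≤ M * ε' := mul_le_mul_of_nonneg_right hFM hε'0.le
      calc |D n| ≤ ∑ a : A, |Real.exp (φ (consSeq a x)) * F (n+1) (consSeq a x)
            - lam * ((μ (cylSet (consSeq a x) (n+1))).toReal / r)| := by
            rw [hDeq]; exact Finset.abs_sum_le_sum_abs _ _
        _ ≤ ∑ _a : A, M * ε' := Finset.sum_le_sum fun a _ => hterm a
        _ = (Fintype.card A : ℝ) * (M * ε') := by
            rw [Finset.sum_const, Finset.card_univ, nsmul_eq_mul]
        _ ≤ K * ε' := by
            have h1 : (Fintype.card A : ℝ) * M ≤ K := by simp only [hK]; linarith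
            calc (Fintype.card A : ℝ) * (M * ε') = ((Fintype.card A : ℝ) * M) * ε' := by ring
              _ ≤ K * ε' := mul_le_mul_of_nonneg_right h1 hε'0.le
        _ = ε / 2 := by rw [hε']; field_simp
        _ < ε := by linarith
    have := tendsto_nhds_unique hlim1 hlim0
    linarith [this]
  refine ⟨hcont, heig, ?_⟩
  -- Part 3 : strict positivity
  have hint_h : Integrable h ν := continuous_integrable ν hcont
  have hinth : ∫ y, h y ∂ν = 1 := by
    have key : ∀ ε > (0:ℝ), |(∫ y, h y ∂ν) - 1| ≤ ε := by
      intro ε hε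
      have hev := (Metric.tendstoUniformly_iff.1 hunif) ε hε
      rcases Filter.eventually_atTop.1 hev with ⟨N, hN⟩
      set Fn : (ℕ → A) → ℝ :=
        fun y => (μ (cylSet y N)).toReal / (ν (cylSet y N)).toReal with hFn
      have hFn_int : Integrable Fn ν := continuous_integrable ν (continuous_hn μ ν N)
      have hFn_one : ∫ y, Fn y ∂ν = 1 := integral_ratio_eq_one μ ν hνpos N
      have hdiff : (∫ y, h y ∂ν) - 1 = ∫ y, (h y - Fn y) ∂ν := by
        rw [integral_sub hint_h hFn_int, hFn_one]
      rw [hdiff]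
      have hb := norm_setIntegral_le_of_norm_le_const (μ := ν) (s := Set.univ)
        (f := fun y => h y - Fn y) (C := ε) (measure_lt_top ν _) ?_
      · rw [setIntegral_univ] at hb
        simpa [Real.norm_eq_abs, measure_univ] using hb
      · intro y _
        rw [Real.norm_eq_abs]
        have := hN N le_rfl y
        rw [Real.dist_eq] at this
        exact this.le
    by_contra hcon
    have h0 : 0 < |(∫ y, h y ∂ν) - 1| := abs_pos.2 (sub_ne_zero.2 hcon)
    have := key (|(∫ y, h y ∂ν) - 1| / 2) (by linarith)
    linarith
  -- the maximum of h is at least 1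
  have hmax1 : 1 ≤ h xM := by
    have hle : ∫ y, h y ∂ν ≤ ∫ _y, h xM ∂ν :=
      integral_mono hint_h (integrable_const _) (fun y => hxM (Set.mem_univ y))
    rw [hinth, integral_const, measureReal_def, measure_univ] at hle
    simpa using hle
  -- a cylinder around xM on which h ≥ 1/2
  obtain ⟨Nc, hNc⟩ : ∃ Nc, cylSet xM Nc ⊆ {y : ℕ → A | |h y - h xM| < 1/2} := by
    apply exists_cylSet_subset
    · exact isOpen_lt ((hcont.sub continuous_const).abs) continuous_const
    · simp
  have hhalf : ∀ y ∈ cylSet xM Nc, (1:ℝ)/2 ≤ h y := by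
    intro y hy
    have := hNc hy
    simp only [Set.mem_setOf_eq] at this
    have := abs_lt.1 this
    linarith [this.1]
  -- one-step and iterated lower bounds
  have hstep : ∀ (a : A) (z : ℕ → A), (c0 / lam) * h (consSeq a z) ≤ h z := by
    intro a z
    have hsum : Real.exp (φ (consSeq a z)) * h (consSeq a z)
        ≤ ∑ b : A, Real.exp (φ (consSeq b z)) * h (consSeq b z) :=
      Finset.single_le_sum (f := fun b => Real.exp (φ (consSeq b z)) * h (consSeq b z))
        (fun b _ => mul_nonneg (Real.exp_pos _).le (hnonneg _)) (Finset.mem_univ a)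
    have hc : c0 * h (consSeq a z) ≤ Real.exp (φ (consSeq a z)) * h (consSeq a z) :=
      mul_le_mul_of_nonneg_right (hbd _).1 (hnonneg _)
    have hlz : c0 * h (consSeq a z) ≤ lam * h z := by
      rw [← heig z]; exact hc.trans hsum
    rw [div_mul_eq_mul_div, div_le_iff₀ hlam]
    linarith
  have hiter : ∀ (n : ℕ) (y z : ℕ → A), (c0 / lam)^n * h (splice n y z) ≤ h z := by
    intro n
    induction n with
    | zero => intro y z; simp [splice_zero]
    | succ n ih =>
      intro y z
      rw [splice_succ, pow_succ]
      calc (c0 / lam)^n * (c0 / lam) * h (consSeq (y 0) (splice n (shiftT y) z))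
          = (c0 / lam)^n * ((c0 / lam) * h (consSeq (y 0) (splice n (shiftT y) z))) := by ring
        _ ≤ (c0 / lam)^n * h (splice n (shiftT y) z) :=
            mul_le_mul_of_nonneg_left (hstep _ _)
              (pow_nonneg (div_nonneg hc0.le hlam.le) n)
        _ ≤ h z := ih (shiftT y) z
  refine ⟨(c0 / lam)^Nc * (1/2), by positivity, fun x => ?_⟩
  have h1 : (1:ℝ)/2 ≤ h (splice Nc xM x) := hhalf _ (splice_mem_cylSet Nc xM x)
  calc (c0 / lam)^Nc * (1/2) ≤ (c0 / lam)^Nc * h (splice Nc xM x) :=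
        mul_le_mul_of_nonneg_left h1 (pow_nonneg (div_nonneg hc0.le hlam.le) Nc)
    _ ≤ h x := hiter Nc xM x
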